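/- Let S ⊆ ℕ contain a nonzero element and be closed under addition, let e = gcd S, let d ≥ 1 be an integer, and let h : ℕ → ℝ≥0 satisfy h(k + s) ≥ h(k) for every k ∈ ℕ and every s ∈ S. Fix f ∈ ℕ and a positive integer p, and for r ∈ ℕ set u_r = limsup_{k→∞} d!·h(f + (k·p + r)·e) / (f + (k·p + r)·e)^d, the limsup taken in [0, ∞]. Then u_r = u_0 for every r ∈ ℕ. -/

import Mathlib

open Filter Topology
open scoped ENNReal NNReal

lemma semigroup_contains_large_multiples (S : Set ℕ)
    (hS0 : ∃ n ∈ S, n ≠ 0)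
    (hSadd : ∀ a ∈ S, ∀ b ∈ S, a + b ∈ S)
    (e : ℕ)
    (he : (∀ s ∈ S, e ∣ s) ∧ ∀ c : ℕ, (∀ s ∈ S, c ∣ s) → c ∣ e) :
    ∃ N : ℕ, 0 < N ∧ ∀ t : ℕ, N ≤ t → t * e ∈ S := by
  obtain ⟨s₀, hs₀, hs₀ne⟩ := hS0
  have he0 : e ≠ 0 := by
    intro h0
    exact hs₀ne (by simpa [h0] using (he.1 s₀ hs₀))
  -- multiples of elements stay in S
  have hnsmul : ∀ n : ℕ, ∀ u ∈ S, (n + 1) * u ∈ S := by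
    intro n
    induction n with
    | zero => intro u hu; simpa using hu
    | succ n ih =>
      intro u hu
      have : (n + 1) * u + u ∈ S := hSadd _ (ih u hu) _ hu
      convert this using 1
      ring
  -- S ∪ {0}
  set S0 : Set ℕ := insert 0 S with hS0def
  have hS0add : ∀ a ∈ S0, ∀ b ∈ S0, a + b ∈ S0 := by
    rintro a (rfl | ha) b (rfl | hb)
    · simp [S0]
    · simpa [S0] using Or.inr hb
    · simpa [S0] using Or.inr ha
    · exact Or.inr (hSadd a ha b hb)
  have hS0s : ∀ u ∈ S0, u + s₀ ∈ S := by
    rintro u (rfl | hu)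
    · simpa using hs₀
    · exact hSadd u hu s₀ hs₀
  -- integer subgroup argument: ∃ x y ∈ S0, x = y + e
  obtain ⟨x, hx, y, hy, hxy⟩ : ∃ x ∈ S0, ∃ y ∈ S0, x = y + e := by
    set S' : Set ℤ := (fun n : ℕ => (n : ℤ)) '' S with hS'
    set H := AddSubgroup.closure S' with hH
    obtain ⟨g, hg⟩ := Int.subgroup_cyclic H
    have hgmem : ∀ s ∈ S, g ∣ (s : ℤ) := by
      intro s hs
      have : (s : ℤ) ∈ H := AddSubgroup.subset_closure ⟨s, hs, rfl⟩
      rw [hg, AddSubgroup.mem_closure_singleton] at this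
      obtain ⟨n, hn⟩ := this
      exact ⟨n, by rw [← hn, smul_eq_mul, mul_comm]⟩
    have hgnat : g.natAbs ∣ e := by
      refine he.2 _ (fun s hs => ?_)
      have := Int.natAbs_dvd_natAbs.mpr (hgmem s hs)
      simpa using this
    have hge : g ∣ (e : ℤ) :=
      (Int.natAbs_dvd.mp (Int.natCast_dvd_natCast.mpr hgnat))
    have heH : (e : ℤ) ∈ H := by
      rw [hg, AddSubgroup.mem_closure_singleton]
      obtain ⟨n, hn⟩ := hge
      exact ⟨n, by rw [smul_eq_mul, mul_comm, ← hn]⟩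
    have hrep : ∀ z ∈ H, ∃ x ∈ S0, ∃ y ∈ S0, z = (x : ℤ) - (y : ℤ) := by
      intro z hz
      induction hz using AddSubgroup.closure_induction with
      | mem w hw =>
        obtain ⟨s, hs, rfl⟩ := hw
        exact ⟨s, Or.inr hs, 0, Or.inl rfl, by simp⟩
      | zero => exact ⟨0, Or.inl rfl, 0, Or.inl rfl, by simp⟩
      | add a b ha hb iha ihb =>
        obtain ⟨x1, hx1, y1, hy1, rfl⟩ := iha
        obtain ⟨x2, hx2, y2, hy2, rfl⟩ := ihb
        exact ⟨x1 + x2, hS0add _ hx1 _ hx2, y1 + y2, hS0add _ hy1 _ hy2, by push_cast; ring⟩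
      | neg a ha iha =>
        obtain ⟨x1, hx1, y1, hy1, rfl⟩ := iha
        exact ⟨y1, hy1, x1, hx1, by ring⟩
    obtain ⟨x, hx, y, hy, hxy⟩ := hrep _ heH
    exact ⟨x, hx, y, hy, by omega⟩
  -- build a = b + e with a b ∈ S, b ≠ 0
  set a := x + s₀ with ha_def
  set b := y + s₀ with hb_def
  have haS : a ∈ S := hS0s x hx
  have hbS : b ∈ S := hS0s y hy
  have hab : a = b + e := by omega
  have hbne : b ≠ 0 := by omega
  -- b = B * e
  obtain ⟨B, hB⟩ : e ∣ b := he.1 b hbS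
  have hBpos : 0 < B := by
    rcases Nat.eq_zero_or_pos B with h | h
    · subst h; simp at hB; omega
    · exact h
  have haB : a = (B + 1) * e := by rw [hab, hB]; ring
  have hbB : b = B * e := by rw [hB]; ring
  refine ⟨B * B, Nat.mul_pos hBpos hBpos, fun t ht => ?_⟩
  set i := t % B with hi_def
  set q := t / B with hq_def
  have hiB : i < B := Nat.mod_lt _ hBpos
  have htq : B * q + i = t := Nat.div_add_mod t B
  have hqB : B ≤ q := by
    rw [hq_def]
    exact Nat.le_div_iff_mul_le hBpos |>.mpr (by nlinarith)
  have hiq : i ≤ q := le_of_lt (lt_of_lt_of_le hiB hqB)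
  set j := q - i with hj_def
  have hqij : q = i + j := by omega
  have hte : t * e = i * a + j * b := by
    rw [haB, hbB]
    have : t = i * (B + 1) + j * B := by nlinarith [htq, hqij]
    rw [this]; ring
  rcases Nat.eq_zero_or_pos i with hi0 | hipos
  · have hjpos : 0 < j := by omega
    have : j * b ∈ S := by
      have := hnsmul (j - 1) b hbS
      rwa [Nat.sub_add_cancel hjpos] at this
    rw [hte, hi0]; simpa using this
  · have hiA : i * a ∈ S := by
      have := hnsmul (i - 1) a haS
      rwa [Nat.sub_add_cancel hipos] at this
    rcases Nat.eq_zero_or_pos j with hj0 | hjpos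
    · rw [hte, hj0]; simpa using hiA
    · have hjB : j * b ∈ S := by
        have := hnsmul (j - 1) b hbS
        rwa [Nat.sub_add_cancel hjpos] at this
      rw [hte]; exact hSadd _ hiA _ hjB


-- pointwise core inequality in ℝ≥0∞
lemma core_ineq (d : ℕ) (x y : ℝ≥0) (t A B : ℝ≥0∞)
    (hxy : (x : ℝ≥0∞) ≤ y) (hB0 : B ≠ 0) (hBtop : B ≠ ⊤) (hA0 : A ≠ 0) (hAtop : A ≠ ⊤)
    (ht0 : t ≠ 0) (httop : t ≠ ⊤) (hAB : A ≤ t * B) :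
    (x : ℝ≥0∞) / B ^ d ≤ t ^ d * ((y : ℝ≥0∞) / A ^ d) := by
  have hpow : A ^ d ≤ t ^ d * B ^ d := by
    rw [← mul_pow]
    exact pow_le_pow_left' hAB d
  have hinv : (B ^ d)⁻¹ ≤ t ^ d * (A ^ d)⁻¹ := by
    rw [← div_eq_mul_inv]
    rw [ENNReal.le_div_iff_mul_le (Or.inl (pow_ne_zero d hA0)) (Or.inl (ENNReal.pow_ne_top hAtop))]
    calc (B ^ d)⁻¹ * A ^ d ≤ (B ^ d)⁻¹ * (t ^ d * B ^ d) := by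
          exact mul_le_mul_right hpow _
      _ = t ^ d * ((B ^ d)⁻¹ * B ^ d) := by ring
      _ = t ^ d := by
          rw [ENNReal.inv_mul_cancel (pow_ne_zero d hB0) (ENNReal.pow_ne_top hBtop), mul_one]
  calc (x : ℝ≥0∞) / B ^ d ≤ (y : ℝ≥0∞) / B ^ d := by
        exact ENNReal.div_le_div_right hxy _
    _ = (y : ℝ≥0∞) * (B ^ d)⁻¹ := by rw [div_eq_mul_inv]
    _ ≤ (y : ℝ≥0∞) * (t ^ d * (A ^ d)⁻¹) := mul_le_mul_right hinv _
    _ = t ^ d * ((y : ℝ≥0∞) / A ^ d) := by rw [div_eq_mul_inv]; ring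

lemma key_limsup_le (S : Set ℕ) (e : ℕ) (he0 : e ≠ 0)
    (N : ℕ) (hN : ∀ t : ℕ, N ≤ t → t * e ∈ S)
    (d : ℕ) (h : ℕ → ℝ≥0)
    (hmono : ∀ k : ℕ, ∀ s ∈ S, h k ≤ h (k + s))
    (f p : ℕ) (hp : 0 < p) (r r' : ℕ) :
    limsup (fun k : ℕ =>
        (Nat.factorial d : ℝ≥0∞) * (h (f + (k * p + r) * e) : ℝ≥0∞)
          / ((f + (k * p + r) * e : ℕ) : ℝ≥0∞) ^ d) atTop
      ≤ limsup (fun k : ℕ =>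
          (Nat.factorial d : ℝ≥0∞) * (h (f + (k * p + r') * e) : ℝ≥0∞)
            / ((f + (k * p + r') * e : ℕ) : ℝ≥0∞) ^ d) atTop := by
  set F : ℕ → ℝ≥0∞ := fun m =>
    (Nat.factorial d : ℝ≥0∞) * (h (f + m * e) : ℝ≥0∞) / ((f + m * e : ℕ) : ℝ≥0∞) ^ d
    with hF
  show limsup (fun k : ℕ => F (k * p + r)) atTop ≤ limsup (fun k : ℕ => F (k * p + r')) atTop
  set c := N + r with hc
  have hcp : c ≤ c * p := Nat.le_mul_of_pos_right c hp
  set D := c * p + r' - r with hD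
  have hND : N ≤ D := by omega
  have hshift : ∀ k : ℕ, (k + c) * p + r' = (k * p + r) + D := by
    intro k
    have : (k + c) * p = k * p + c * p := by ring
    omega
  have hDe : D * e ∈ S := hN D hND
  set L' := limsup (fun k : ℕ => F (k * p + r')) atTop with hL'
  -- for each n, limsup ≤ ((n+2)/(n+1))^d * L'
  have main : ∀ n : ℕ,
      limsup (fun k : ℕ => F (k * p + r)) atTop
        ≤ (((n : ℝ≥0∞) + 2) / ((n : ℝ≥0∞) + 1)) ^ d * L' := by
    intro n
    set t : ℝ≥0∞ := ((n : ℝ≥0∞) + 2) / ((n : ℝ≥0∞) + 1) with htdef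
    have hn1 : ((n : ℝ≥0∞) + 1) ≠ 0 := by simp
    have hn1top : ((n : ℝ≥0∞) + 1) ≠ ⊤ := by simp [ENNReal.add_ne_top]
    have hn2top : ((n : ℝ≥0∞) + 2) ≠ ⊤ := by simp [ENNReal.add_ne_top]
    have ht0 : t ≠ 0 := by
      rw [htdef]
      simp [ENNReal.div_eq_zero_iff, hn1top]
    have httop : t ≠ ⊤ := by
      rw [htdef]
      exact (ENNReal.div_lt_top hn2top hn1).ne
    have hev : ∀ᶠ k in atTop, F (k * p + r) ≤ t ^ d * F ((k + c) * p + r') := by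
      filter_upwards [eventually_ge_atTop ((n + 1) * (D * e) + 1)] with k hk
      set m := k * p + r with hm
      have hkm : k ≤ m := by
        have : k ≤ k * p := Nat.le_mul_of_pos_right k hp
        omega
      set B := f + m * e with hBdef
      set A := f + (m + D) * e with hAdef
      have hAB : A = B + D * e := by
        rw [hAdef, hBdef]; ring
      have hBk : k ≤ B := by
        have h1 : m ≤ m * e := Nat.le_mul_of_pos_right m (Nat.pos_of_ne_zero he0)
        omega
      have hB1 : 1 ≤ B := by omega
      -- nat inequality
      have hnat : (n + 1) * A ≤ (n + 2) * B := by
        have h1 : (n + 1) * (D * e) ≤ k := by omega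
        calc (n + 1) * A = (n + 1) * B + (n + 1) * (D * e) := by rw [hAB]; ring
          _ ≤ (n + 1) * B + B := by omega
          _ = (n + 2) * B := by ring
      -- ENNReal version
      have hABenn : (A : ℝ≥0∞) ≤ t * (B : ℝ≥0∞) := by
        have ht : t * (B : ℝ≥0∞) = (((n : ℝ≥0∞) + 2) * B) / ((n : ℝ≥0∞) + 1) := by
          rw [htdef, div_eq_mul_inv, mul_right_comm, ← div_eq_mul_inv]
        rw [ht, ENNReal.le_div_iff_mul_le (Or.inl hn1) (Or.inl hn1top)]
        have := (Nat.cast_le (α := ℝ≥0∞)).mpr hnat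
        push_cast at this
        calc (A : ℝ≥0∞) * ((n : ℝ≥0∞) + 1) = ((n : ℝ≥0∞) + 1) * A := by ring
          _ ≤ ((n : ℝ≥0∞) + 2) * B := this
      have hnum : h (f + m * e) ≤ h (f + (m + D) * e) := by
        have : f + (m + D) * e = (f + m * e) + D * e := by ring
        rw [this]
        exact hmono _ _ hDe
      have hmain : F m ≤ t ^ d * F (m + D) := by
        rw [hF]
        simp only
        rw [mul_div_assoc, mul_div_assoc]
        calc (Nat.factorial d : ℝ≥0∞) * ((h (f + m * e) : ℝ≥0∞) / ((f + m * e : ℕ) : ℝ≥0∞) ^ d)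
            ≤ (Nat.factorial d : ℝ≥0∞) * (t ^ d * ((h (f + (m + D) * e) : ℝ≥0∞) / ((f + (m + D) * e : ℕ) : ℝ≥0∞) ^ d)) := by
              refine mul_le_mul_right ?_ _
              refine core_ineq d _ _ t _ _ (ENNReal.coe_le_coe.mpr hnum) ?_ ?_ ?_ ?_ ht0 httop ?_
              · exact_mod_cast Nat.one_le_iff_ne_zero.mp hB1
              · exact ENNReal.natCast_ne_top _
              · have : 1 ≤ A := by omega
                exact_mod_cast Nat.one_le_iff_ne_zero.mp this
              · exact ENNReal.natCast_ne_top _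
              · exact hABenn
          _ = t ^ d * ((Nat.factorial d : ℝ≥0∞) * ((h (f + (m + D) * e) : ℝ≥0∞) / ((f + (m + D) * e : ℕ) : ℝ≥0∞) ^ d)) := by ring
      rw [hshift k]
      exact hmain
    calc limsup (fun k : ℕ => F (k * p + r)) atTop
        ≤ limsup (fun k : ℕ => t ^ d * F ((k + c) * p + r')) atTop :=
          limsup_le_limsup hev
      _ = t ^ d * limsup (fun k : ℕ => F ((k + c) * p + r')) atTop :=
          ENNReal.limsup_const_mul_of_ne_top (ENNReal.pow_ne_top httop)
      _ = t ^ d * L' := by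
          rw [hL']
          congr 1
          exact limsup_nat_add (fun k : ℕ => F (k * p + r')) c
  -- conclude by letting n → ∞
  by_cases hLtop : L' = ⊤
  · rw [hLtop]
    exact le_top
  · have htend : Tendsto (fun n : ℕ => (((n : ℝ≥0∞) + 2) / ((n : ℝ≥0∞) + 1)) ^ d * L')
        atTop (𝓝 L') := by
      have h1 : Tendsto (fun n : ℕ => ((n : ℝ≥0∞) + 2) / ((n : ℝ≥0∞) + 1)) atTop (𝓝 1) := by
        have heq : (fun n : ℕ => ((n : ℝ≥0∞) + 2) / ((n : ℝ≥0∞) + 1))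
            = fun n : ℕ => 1 + (((n + 1 : ℕ) : ℝ≥0∞))⁻¹ := by
          funext n
          have hn1 : ((n : ℝ≥0∞) + 1) ≠ 0 := by simp
          have hn1top : ((n : ℝ≥0∞) + 1) ≠ ⊤ := by simp [ENNReal.add_ne_top]
          have : ((n : ℝ≥0∞) + 2) = ((n : ℝ≥0∞) + 1) + 1 := by ring
          rw [this, ENNReal.add_div, ENNReal.div_self hn1 hn1top, one_div]
          push_cast
          ring_nf
        rw [heq]
        have h2 : Tendsto (fun n : ℕ => (((n + 1 : ℕ) : ℝ≥0∞))⁻¹) atTop (𝓝 0) :=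
          ENNReal.tendsto_inv_nat_nhds_zero.comp (tendsto_add_atTop_nat 1)
        have := h2.const_add (1 : ℝ≥0∞)
        simpa using this
      have h3 : Tendsto (fun n : ℕ => (((n : ℝ≥0∞) + 2) / ((n : ℝ≥0∞) + 1)) ^ d)
          atTop (𝓝 1) := by
        have := ((ENNReal.continuous_pow d).tendsto 1).comp h1
        simpa [Function.comp_def] using this
      have := ENNReal.Tendsto.mul_const (b := L') h3 (Or.inl one_ne_zero)
      simpa using this
    exact ge_of_tendsto' htend main

theorem limsup_thinned_progression_shift_invariant (S : Set ℕ)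
    (hS0 : ∃ n ∈ S, n ≠ 0)
    (hSadd : ∀ a ∈ S, ∀ b ∈ S, a + b ∈ S)
    (e : ℕ)
    (he : (∀ s ∈ S, e ∣ s) ∧ ∀ c : ℕ, (∀ s ∈ S, c ∣ s) → c ∣ e)
    (d : ℕ) (hd : 1 ≤ d)
    (h : ℕ → ℝ≥0)
    (hmono : ∀ k : ℕ, ∀ s ∈ S, h k ≤ h (k + s))
    (f p : ℕ) (hp : 0 < p) :
    ∀ r : ℕ,
      limsup (fun k : ℕ =>
          (Nat.factorial d : ℝ≥0∞) * (h (f + (k * p + r) * e) : ℝ≥0∞)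
            / ((f + (k * p + r) * e : ℕ) : ℝ≥0∞) ^ d) atTop
        = limsup (fun k : ℕ =>
            (Nat.factorial d : ℝ≥0∞) * (h (f + (k * p + 0) * e) : ℝ≥0∞)
              / ((f + (k * p + 0) * e : ℕ) : ℝ≥0∞) ^ d) atTop := by
  obtain ⟨s₀, hs₀, hs₀ne⟩ := hS0
  have he0 : e ≠ 0 := by
    intro h0
    exact hs₀ne (by simpa [h0] using (he.1 s₀ hs₀))
  obtain ⟨N, hNpos, hN⟩ := semigroup_contains_large_multiples S ⟨s₀, hs₀, hs₀ne⟩ hSadd e he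
  intro r
  exact le_antisymm
    (key_limsup_le S e he0 N hN d h hmono f p hp r 0)
    (key_limsup_le S e he0 N hN d h hmono f p hp 0 r)
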